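/- Let k, d be positive integers and write d ≡ r (mod k) with 0 ≤ r ≤ k−1. There exists n₀ = n₀(d,k) such that for every n ≥ n₀, every k-wise (n−d)-union family 𝒜 of subsets of [n] satisfies |𝒜| ≤ 2^r · Σ_{i=0}^{⌊d/k⌋} C(n−r, i). -/

import Mathlib

/-- A set `Y` is shattered by the family `F` if every subset of `Y`
is the trace of some member of `F` on `Y`. -/
def Shatters {α : Type*} [DecidableEq α] (F : Finset (Finset α)) (Y : Finset α) : Prop :=
  ∀ T ⊆ Y, ∃ S ∈ F, S ∩ Y = T

/-- The VC dimension of a family: the largest cardinality of a shattered set. -/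
noncomputable def vcDim {α : Type*} [DecidableEq α] (F : Finset (Finset α)) : ℕ :=
  sSup {m | ∃ Y : Finset α, Shatters F Y ∧ Y.card = m}

/-- `S₁ △ S₂ △ ⋯ △ S_k` for a `k`-tuple of sets. -/
def symmDiffAll {α : Type*} [DecidableEq α] {k : ℕ} (f : Fin k → Finset α) : Finset α :=
  (List.ofFn f).foldr symmDiff ∅

/-- The `k`-fold symmetric difference family `△𝒜^k`. -/
def symmDiffFam {α : Type*} [DecidableEq α] (k : ℕ) (A : Finset (Finset α)) :
    Finset (Finset α) :=
  (Fintype.piFinset fun _ : Fin k => A).image symmDiffAll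

/-- The family `𝒜₁ △ ⋯ △ 𝒜ₖ`. -/
def symmDiffFamMulti {α : Type*} [DecidableEq α] {k : ℕ} (A : Fin k → Finset (Finset α)) :
    Finset (Finset α) :=
  (Fintype.piFinset A).image symmDiffAll

/-- A family is `k`-wise `(n-d)`-union if any `k` of its members have union of size `≤ d`. -/
def KwiseUnion {α : Type*} [DecidableEq α] (k d : ℕ) (A : Finset (Finset α)) : Prop :=
  ∀ f : Fin k → Finset α, (∀ i, f i ∈ A) → (Finset.univ.sup f).card ≤ d

/-- The `i`-compression of a family. -/
def compress {α : Type*} [DecidableEq α] (i : α) (A : Finset (Finset α)) :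
    Finset (Finset α) :=
  A.image fun S => if S ∈ A ∧ S.erase i ∈ A then S else S.erase i

/-- The `(i,j)`-shift of a family. -/
def shiftIJ {α : Type*} [DecidableEq α] (i j : α) (A : Finset (Finset α)) :
    Finset (Finset α) :=
  A.image fun S => if i ∉ S ∧ j ∈ S ∧ insert i (S.erase j) ∉ A then insert i (S.erase j) else S

/-- `p(n,k,d)`: the maximum size of a `k`-wise `(n-d)`-union family on `[n]`. -/
noncomputable def pMax (n k d : ℕ) : ℕ :=
  sSup {m | ∃ F : Finset (Finset (Fin n)), KwiseUnion k d F ∧ F.card = m}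


section Statement10Aux




lemma sum_choose_succ_eq (m q : ℕ) :
    ∑ i ∈ Finset.range (q+1), (m+1).choose i
      = ∑ i ∈ Finset.range (q+1), m.choose i + ∑ i ∈ Finset.range q, m.choose i := by
  induction q with
  | zero => simp
  | succ q ih =>
    rw [Finset.sum_range_succ ((m+1).choose) (q+1), ih,
      Finset.sum_range_succ (m.choose) (q+1), Finset.sum_range_succ (m.choose) q,
      Nat.choose_succ_succ (m) (q)]
    ring

lemma sum_choose_add_le (t m q : ℕ) :
    ∑ i ∈ Finset.range (q+1), (m+t).choose i ≤ 2^t * ∑ i ∈ Finset.range (q+1), m.choose i := by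
  induction t with
  | zero => simp
  | succ t ih =>
    have h1 : m + (t+1) = (m+t) + 1 := rfl
    rw [h1, sum_choose_succ_eq]
    have h2 : ∑ i ∈ Finset.range q, (m+t).choose i ≤ ∑ i ∈ Finset.range (q+1), (m+t).choose i :=
      Finset.sum_le_sum_of_subset (Finset.range_subset_range.2 (by omega))
    calc ∑ i ∈ Finset.range (q+1), (m+t).choose i + ∑ i ∈ Finset.range q, (m+t).choose i
        ≤ 2 * ∑ i ∈ Finset.range (q+1), (m+t).choose i := by omega
      _ ≤ 2 * (2^t * ∑ i ∈ Finset.range (q+1), m.choose i) := by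
          exact Nat.mul_le_mul_left 2 ih
      _ = 2^(t+1) * ∑ i ∈ Finset.range (q+1), m.choose i := by ring

lemma mono_bound (n a b q : ℕ) (hab : a ≤ b) (hbn : b ≤ n) :
    2^a * ∑ i ∈ Finset.range (q+1), (n-a).choose i
      ≤ 2^b * ∑ i ∈ Finset.range (q+1), (n-b).choose i := by
  have h : n - a = (n-b) + (b-a) := by omega
  rw [h]
  calc 2^a * ∑ i ∈ Finset.range (q+1), ((n-b)+(b-a)).choose i
      ≤ 2^a * (2^(b-a) * ∑ i ∈ Finset.range (q+1), (n-b).choose i) :=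
        Nat.mul_le_mul_left _ (sum_choose_add_le _ _ _)
    _ = 2^b * ∑ i ∈ Finset.range (q+1), (n-b).choose i := by
        rw [← Nat.mul_assoc, ← Nat.pow_add]
        congr 2
        omega



lemma pair_bound {α : Type*} [Fintype α] [DecidableEq α]
    (A : Finset (Finset α)) (R : Finset α) (q : ℕ)
    (h : ∀ S ∈ A, (S \ R).card ≤ q) :
    A.card ≤ 2 ^ R.card * ∑ i ∈ Finset.range (q+1), (Fintype.card α - R.card).choose i := by
  classical
  set P := R.powerset ×ˢ (Finset.range (q+1)).biUnion (fun i => Finset.powersetCard i Rᶜ) with hP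
  have hmap : ∀ S ∈ A, (S ∩ R, S \ R) ∈ P := by
    intro S hS
    rw [hP, Finset.mem_product]
    constructor
    · exact Finset.mem_powerset.2 Finset.inter_subset_right
    · refine Finset.mem_biUnion.2 ⟨(S \ R).card, Finset.mem_range.2 (by have := h S hS; omega), ?_⟩
      refine Finset.mem_powersetCard.2 ⟨?_, rfl⟩
      intro x hx
      simp only [Finset.mem_sdiff] at hx
      simp [hx.2]
  have hinj : Set.InjOn (fun S => (S ∩ R, S \ R)) A := by
    intro S hS S' hS' heq
    simp only [Prod.mk.injEq] at heq
    have h2 : S \ R ∪ S ∩ R = S' \ R ∪ S' ∩ R := by rw [heq.1, heq.2]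
    rwa [Finset.sdiff_union_inter, Finset.sdiff_union_inter] at h2
  calc A.card ≤ P.card := Finset.card_le_card_of_injOn _ hmap hinj
    _ ≤ 2 ^ R.card * ∑ i ∈ Finset.range (q+1), (Fintype.card α - R.card).choose i := by
        rw [hP, Finset.card_product, Finset.card_powerset]
        refine Nat.mul_le_mul_left _ ?_
        refine le_trans (Finset.card_biUnion_le) ?_
        refine Finset.sum_le_sum ?_
        intro i _
        rw [Finset.card_powersetCard, Finset.card_compl]



lemma absorb (K q r : ℕ) (hq : 1 ≤ q) :
    ∃ n₁ : ℕ, ∀ n, n₁ ≤ n → K * n ^ (q-1) ≤ (n - r).choose q := by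
  refine ⟨2*(r+q) + 2^q * q.factorial * K + 2, fun n hn => ?_⟩
  set a := r + q with ha
  have h2a : 2*a ≤ n := by omega
  have hnn : n ≤ 2 * (n - a) := by omega
  -- n^(q-1) ≤ 2^(q-1) * (n-a)^(q-1)
  have h4 : n^(q-1) ≤ 2^(q-1) * (n-a)^(q-1) := by
    calc n^(q-1) ≤ (2*(n-a))^(q-1) := Nat.pow_le_pow_left hnn _
      _ = 2^(q-1) * (n-a)^(q-1) := by rw [Nat.mul_pow]
  have h2q : 2^(q-1) ≤ 2^q := Nat.pow_le_pow_right (by norm_num) (by omega)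
  have h5 : q.factorial * K * 2^(q-1) ≤ n - a := by
    have : 2^(q-1) * q.factorial * K ≤ 2^q * q.factorial * K :=
      Nat.mul_le_mul_right _ (Nat.mul_le_mul_right _ h2q)
    have h6 : 2^q * q.factorial * K ≤ n - a := by omega
    calc q.factorial * K * 2^(q-1) = 2^(q-1) * q.factorial * K := by ring
      _ ≤ n - a := le_trans this h6
  -- main chain
  have key : q.factorial * (K * n^(q-1)) ≤ (n-a)^q := by
    have hq' : (n-a)^q = (n-a) * (n-a)^(q-1) := by
      have : q - 1 + 1 = q := by omega
      conv_lhs => rw [← this]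
      rw [pow_succ]; ring
    calc q.factorial * (K * n^(q-1)) ≤ q.factorial * (K * (2^(q-1) * (n-a)^(q-1))) :=
          Nat.mul_le_mul_left _ (Nat.mul_le_mul_left _ h4)
      _ = (q.factorial * K * 2^(q-1)) * (n-a)^(q-1) := by ring
      _ ≤ (n-a) * (n-a)^(q-1) := Nat.mul_le_mul_right _ h5
      _ = (n-a)^q := hq'.symm
  have hb : (n - a)^q ≤ (n - r + 1 - q)^q := Nat.pow_le_pow_left (by omega) _
  have hdesc : (n - r + 1 - q)^q ≤ (n-r).descFactorial q := Nat.pow_sub_le_descFactorial _ _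
  have hdf : (n-r).descFactorial q = q.factorial * (n-r).choose q :=
    Nat.descFactorial_eq_factorial_mul_choose _ _
  have : q.factorial * (K * n^(q-1)) ≤ q.factorial * (n-r).choose q := by
    omega
  exact Nat.le_of_mul_le_mul_left this (Nat.factorial_pos q)

lemma exists_disjoint_of_matching {α : Type*} [DecidableEq α]
    (M : Finset (Finset α)) (B : Finset α)
    (hdisj : ∀ Q ∈ M, ∀ Q' ∈ M, Q ≠ Q' → Disjoint Q Q') (hcard : B.card < M.card) :
    ∃ Q ∈ M, Disjoint Q B := by
  by_contra hcon
  push_neg at hcon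
  have hex : ∀ Q ∈ M, ∃ x, x ∈ Q ∧ x ∈ B := by
    intro Q hQ
    exact Finset.not_disjoint_iff.1 (hcon Q hQ)
  choose f hf1 hf2 using hex
  have : M.card ≤ B.card := by
    have hBne : B.Nonempty := by
      obtain ⟨Q, hQ⟩ := Finset.card_pos.1 (lt_of_le_of_lt (Nat.zero_le _) hcard)
      exact ⟨f Q hQ, hf2 Q hQ⟩
    obtain ⟨b0, hb0⟩ := hBne
    refine Finset.card_le_card_of_injOn (fun Q => if h : Q ∈ M then f Q h else b0) ?_ ?_
    · intro Q hQ; simp only [Finset.mem_coe] at hQ ⊢; rw [dif_pos hQ]; exact hf2 Q hQ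

    · intro Q hQ Q' hQ' heq
      simp only [Finset.mem_coe] at hQ hQ'
      simp only [hQ, hQ', dif_pos] at heq
      by_contra hne
      have hd := hdisj Q hQ Q' hQ' hne
      exact (Finset.disjoint_left.1 hd (hf1 Q hQ)) (heq ▸ hf1 Q' hQ')
  omega

lemma count_contain {α : Type*} [Fintype α] [DecidableEq α] (x : α) (q : ℕ)
    (F : Finset (Finset α)) (hF : ∀ Q ∈ F, Q.card = q ∧ x ∈ Q) :
    F.card ≤ (Fintype.card α) ^ (q-1) := by
  have h1 : F.card ≤ ((Finset.univ.erase x).powersetCard (q-1)).card := by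
    refine Finset.card_le_card_of_injOn (fun Q => Q.erase x) ?_ ?_
    · intro Q hQ
      refine Finset.mem_powersetCard.2 ⟨?_, ?_⟩
      · intro y hy
        simp only [Finset.mem_erase] at hy ⊢
        exact ⟨hy.1, Finset.mem_univ _⟩
      · rw [Finset.card_erase_of_mem (hF Q hQ).2, (hF Q hQ).1]
    · intro Q hQ Q' hQ' heq
      simp only [Finset.mem_coe] at hQ hQ'
      have h2 : insert x (Q.erase x) = insert x (Q'.erase x) := by
        simp only at heq
        rw [heq]
      rwa [Finset.insert_erase (hF Q hQ).2, Finset.insert_erase (hF Q' hQ').2] at h2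
  rw [Finset.card_powersetCard, Finset.card_erase_of_mem (Finset.mem_univ x)] at h1
  calc F.card ≤ (Finset.univ.card - 1).choose (q-1) := h1
    _ ≤ (Finset.univ.card - 1)^(q-1) := Nat.choose_le_pow _ _
    _ ≤ (Fintype.card α)^(q-1) := Nat.pow_le_pow_left (by rw [Finset.card_univ]; omega) _





lemma matchcount {α : Type*} [Fintype α] [DecidableEq α]
    (Qf : Finset (Finset α)) (q c : ℕ) (hq : 1 ≤ q)
    (hcard : ∀ Q ∈ Qf, Q.card = q)
    (hnom : ∀ M ⊆ Qf, (∀ Q ∈ M, ∀ Q' ∈ M, Q ≠ Q' → Disjoint Q Q') → M.card ≤ c) :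
    Qf.card ≤ c * q * (Fintype.card α) ^ (q-1) := by
  classical
  -- maximal matching
  set Pm := Qf.powerset.filter
    (fun M => ∀ Q ∈ M, ∀ Q' ∈ M, Q ≠ Q' → Disjoint Q Q') with hPm
  have hPmne : Pm.Nonempty := ⟨∅, by simp [hPm]⟩
  obtain ⟨M, hMPm, hMmax⟩ := Finset.exists_max_image Pm Finset.card hPmne
  rw [hPm, Finset.mem_filter, Finset.mem_powerset] at hMPm
  obtain ⟨hMQf, hMdisj⟩ := hMPm
  set C := M.sup id with hC
  have hCcard : C.card ≤ c * q := by
    have h1 : C.card ≤ ∑ Q ∈ M, Q.card := by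
      rw [hC, Finset.sup_eq_biUnion]
      exact le_trans (Finset.card_biUnion_le) (le_of_eq rfl)
    have h2 : ∑ Q ∈ M, Q.card = M.card * q := by
      rw [Finset.sum_congr rfl (fun Q hQ => hcard Q (hMQf hQ)), Finset.sum_const, smul_eq_mul]
    have h3 : M.card ≤ c := hnom M hMQf hMdisj
    calc C.card ≤ M.card * q := by omega
      _ ≤ c * q := Nat.mul_le_mul_right _ h3
  have hmeet : ∀ Q ∈ Qf, ∃ x, x ∈ C ∧ x ∈ Q := by
    intro Q hQ
    by_contra hcon
    push_neg at hcon
    have hdisjC : Disjoint Q C := by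
      rw [Finset.disjoint_right]; intro x hx hxQ; exact hcon x hx hxQ
    have hQnotM : Q ∉ M := by
      intro hQM
      have hQC : Q ⊆ C := by rw [hC]; exact Finset.le_sup (f := id) hQM
      have : Q.Nonempty := Finset.card_pos.1 (by rw [hcard Q hQ]; omega)
      obtain ⟨x, hx⟩ := this
      exact hcon x (hQC hx) hx
    have hins : insert Q M ∈ Pm := by
      rw [hPm, Finset.mem_filter, Finset.mem_powerset]
      refine ⟨Finset.insert_subset hQ hMQf, ?_⟩
      have hQdisjAll : ∀ P ∈ M, Disjoint Q P := by
        intro P hP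
        refine Finset.disjoint_left.2 fun x hx hx' => hcon x ?_ hx
        exact Finset.le_sup (f := id) hP hx'
      intro P hP P' hP' hne
      rcases Finset.mem_insert.1 hP with h1 | h1
      · rcases Finset.mem_insert.1 hP' with h2 | h2
        · exact absurd (h1.trans h2.symm) hne
        · exact h1 ▸ hQdisjAll P' h2
      · rcases Finset.mem_insert.1 hP' with h2 | h2
        · exact (h2 ▸ hQdisjAll P h1).symm
        · exact hMdisj P h1 P' h2 hne
    have := hMmax _ hins
    rw [Finset.card_insert_of_notMem hQnotM] at this
    omega
  -- now count
  have hsub : Qf ⊆ C.biUnion (fun x => Qf.filter (fun Q => x ∈ Q)) := by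
    intro Q hQ
    obtain ⟨x, hxC, hxQ⟩ := hmeet Q hQ
    exact Finset.mem_biUnion.2 ⟨x, hxC, Finset.mem_filter.2 ⟨hQ, hxQ⟩⟩
  calc Qf.card ≤ (C.biUnion (fun x => Qf.filter (fun Q => x ∈ Q))).card :=
        Finset.card_le_card hsub
    _ ≤ ∑ x ∈ C, (Qf.filter (fun Q => x ∈ Q)).card := Finset.card_biUnion_le
    _ ≤ ∑ _x ∈ C, (Fintype.card α)^(q-1) := by
        refine Finset.sum_le_sum fun x _ => ?_
        refine count_contain x q _ fun Q hQ => ?_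
        have := Finset.mem_filter.1 hQ
        exact ⟨hcard Q this.1, this.2⟩
    _ = C.card * (Fintype.card α)^(q-1) := by rw [Finset.sum_const, smul_eq_mul]
    _ ≤ c * q * (Fintype.card α)^(q-1) := Nat.mul_le_mul_right _ hCcard



lemma picktails {α : Type*} [DecidableEq α] (A : Finset (Finset α)) (W B : Finset α)
    (q N : ℕ) (m : ℕ) (g : ℕ → Finset α)
    (hfull : ∀ i < m, ∃ M : Finset (Finset α),
      N < M.card ∧ (∀ Q ∈ M, Q.card = q ∧ Q ∩ W = ∅ ∧ g i ∪ Q ∈ A) ∧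
      (∀ Q ∈ M, ∀ Q' ∈ M, Q ≠ Q' → Disjoint Q Q'))
    (hB : ∀ i < m, B.card + i * q ≤ N) :
    ∃ Q : ℕ → Finset α, ∀ i < m, (Q i).card = q ∧ (Q i) ∩ W = ∅ ∧ g i ∪ Q i ∈ A ∧
      Disjoint (Q i) B ∧ ∀ j < i, Disjoint (Q i) (Q j) := by
  induction m with
  | zero => exact ⟨fun _ => ∅, fun i hi => absurd hi (by omega)⟩
  | succ m ih =>
    obtain ⟨Q, hQ⟩ := ih (fun i hi => hfull i (by omega)) (fun i hi => hB i (by omega))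
    obtain ⟨M, hMcard, hMmem, hMdisj⟩ := hfull m (by omega)
    set Bm := B ∪ (Finset.range m).biUnion (fun j => Q j) with hBm
    have hBmcard : Bm.card < M.card := by
      have h1 : Bm.card ≤ B.card + ∑ j ∈ Finset.range m, (Q j).card :=
        le_trans (Finset.card_union_le _ _)
          (by exact Nat.add_le_add_left Finset.card_biUnion_le _)
      have h2 : ∑ j ∈ Finset.range m, (Q j).card = m * q := by
        rw [Finset.sum_congr rfl (fun j hj => (hQ j (by
          simp only [Finset.mem_range] at hj; omega)).1), Finset.sum_const, smul_eq_mul,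
          Finset.card_range]
      have h3 := hB m (by omega)
      omega
    obtain ⟨Qm, hQmM, hQmdisj⟩ := exists_disjoint_of_matching M Bm hMdisj hBmcard
    refine ⟨Function.update Q m Qm, fun i hi => ?_⟩
    rcases Nat.lt_or_ge i m with him | him
    · have hne : i ≠ m := by omega
      rw [Function.update_of_ne hne]
      obtain ⟨p1, p2, p3, p4, p5⟩ := hQ i him
      refine ⟨p1, p2, p3, p4, fun j hj => ?_⟩
      rw [Function.update_of_ne (by omega : j ≠ m)]
      exact p5 j hj
    · have hie : i = m := by omega
      subst hie
      rw [Function.update_self]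
      obtain ⟨p1, p2, p3⟩ := hMmem Qm hQmM
      refine ⟨p1, p2, p3, ?_, fun j hj => ?_⟩
      · exact hQmdisj.mono_right (by rw [hBm]; exact Finset.subset_union_left)
      · rw [Function.update_of_ne (by omega : j ≠ i)]
        refine hQmdisj.mono_right ?_
        rw [hBm]
        refine le_trans ?_ Finset.subset_union_right
        exact Finset.subset_biUnion_of_mem _ (Finset.mem_range.2 hj)

-- greedy lemma: find W = union of k-1 members s.t. every member sticks out by ≤ d/k,
lemma greedy {n k d : ℕ} (hk : 0 < k) (A : Finset (Finset (Fin n))) (hA : KwiseUnion k d A)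
    (hAne : A.Nonempty) :
    ∃ W : Finset (Fin n), W.card ≤ d ∧ ∀ S ∈ A, (S \ W).card ≤ d / k := by
  classical
  have hpick : ∀ U : Finset (Fin n), ∃ S, S ∈ A ∧ ∀ S' ∈ A, (S' \ U).card ≤ (S \ U).card := by
    intro U
    obtain ⟨S, hS, hmax⟩ := Finset.exists_max_image A (fun S => (S \ U).card) hAne
    exact ⟨S, hS, hmax⟩
  choose p hpA hpmax using hpick
  set U : ℕ → Finset (Fin n) := fun i => Nat.rec ∅ (fun _ acc => acc ∪ p acc) i with hU
  have hUsucc : ∀ i, U (i+1) = U i ∪ p (U i) := fun i => rfl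
  have hUmono : ∀ i, U i ⊆ U (i+1) := by
    intro i; rw [hUsucc]; exact Finset.subset_union_left
  have hUmono' : ∀ i j, i ≤ j → U i ⊆ U j := by
    intro i j hij
    induction j with
    | zero => have : i = 0 := by omega
              subst this; exact Finset.Subset.refl _
    | succ j ih =>
      rcases Nat.lt_or_ge i (j+1) with h | h
      · exact (ih (by omega)).trans (hUmono j)
      · have : i = j+1 := by omega
        subst this; exact Finset.Subset.refl _
  set t : ℕ → ℕ := fun i => (p (U i) \ U i).card with ht
  have hcardU : ∀ i, (U i).card = ∑ j ∈ Finset.range i, t j := by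
    intro i
    induction i with
    | zero => simp [hU]
    | succ i ih =>
      rw [Finset.sum_range_succ, hUsucc, Finset.union_comm, ← Finset.card_sdiff_add_card, ih]
      have hti : t i = (p (U i) \ U i).card := rfl
      omega
  have htmono : ∀ i, t (i+1) ≤ t i := by
    intro i
    calc t (i+1) = (p (U (i+1)) \ U (i+1)).card := rfl
      _ ≤ (p (U (i+1)) \ U i).card :=
          Finset.card_le_card (Finset.sdiff_subset_sdiff (Finset.Subset.refl _) (hUmono i))
      _ ≤ (p (U i) \ U i).card := hpmax (U i) _ (hpA (U (i+1)))
      _ = t i := rfl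
  have htmono' : ∀ i j, i ≤ j → t j ≤ t i := by
    intro i j hij
    induction j with
    | zero => have : i = 0 := by omega
              subst this; exact le_refl _
    | succ j ih =>
      rcases Nat.lt_or_ge i (j+1) with h | h
      · exact (htmono j).trans (ih (by omega))
      · have : i = j+1 := by omega
        subst this; exact le_refl _
  have hUk : (U k).card ≤ d := by
    have hsub : U k ⊆ Finset.univ.sup (fun j : Fin k => p (U j.val)) := by
      have : ∀ i, i ≤ k → U i ⊆ Finset.univ.sup (fun j : Fin k => p (U j.val)) := by
        intro i hi
        induction i with
        | zero => simp [hU]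
        | succ i ih =>
          rw [hUsucc]
          refine Finset.union_subset (ih (by omega)) ?_
          exact Finset.le_sup (f := fun j : Fin k => p (U j.val)) (Finset.mem_univ ⟨i, by omega⟩)
      exact this k (le_refl _)
    exact le_trans (Finset.card_le_card hsub) (hA _ (fun j => hpA _))
  have htk : t (k-1) ≤ d / k := by
    rw [Nat.le_div_iff_mul_le hk]
    have h1 : k * t (k-1) ≤ ∑ j ∈ Finset.range k, t j := by
      calc k * t (k-1) = ∑ _j ∈ Finset.range k, t (k-1) := by
            rw [Finset.sum_const, Finset.card_range, smul_eq_mul]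
        _ ≤ ∑ j ∈ Finset.range k, t j := by
            refine Finset.sum_le_sum fun j hj => ?_
            exact htmono' j (k-1) (by simp only [Finset.mem_range] at hj; omega)
    rw [← hcardU] at h1
    rw [Nat.mul_comm] at h1
    omega
  refine ⟨U (k-1), ?_, ?_⟩
  · exact le_trans (Finset.card_le_card (hUmono' (k-1) k (by omega))) hUk
  · intro S hS
    exact le_trans (hpmax (U (k-1)) S hS) htk
section CoreSec
variable {n k d q r : ℕ}
lemma core (hk : 0 < k) (hq : q = d/k) (hr : r = d%k) (hq1 : 1 ≤ q)
    (A : Finset (Finset (Fin n))) (hA : KwiseUnion k d A)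
    (W : Finset (Fin n)) (hW : W.card ≤ d) (hSW : ∀ S ∈ A, (S \ W).card ≤ q)
    (hrn : r + 1 ≤ n)
    (hbig : (2^d*q + 2^d*k*q*q) * n^(q-1) ≤ (n-r).choose q) :
    A.card ≤ 2^r * ∑ i ∈ Finset.range (q+1), (n-r).choose i := by
  classical
  have hrk : r < k := hr ▸ Nat.mod_lt _ hk
  have hdqr : k * q + r = d := by rw [hq, hr]; exact Nat.div_add_mod d k
  set Full : Finset (Fin n) → Prop := fun T => ∃ M : Finset (Finset (Fin n)),
      (k-1)*q < M.card ∧ (∀ Q ∈ M, Q.card = q ∧ Q ∩ W = ∅ ∧ T ∪ Q ∈ A) ∧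
      (∀ Q ∈ M, ∀ Q' ∈ M, Q ≠ Q' → Disjoint Q Q') with hFullDef
  set FullTrace : Finset (Fin n) → Prop := fun T => T ⊆ W ∧ Full T with hFTDef
  set R : Finset (Fin n) := W.filter (fun x => ∃ T, FullTrace T ∧ x ∈ T) with hRdef
  have hRW : R ⊆ W := Finset.filter_subset _ _
  have hTR : ∀ T, FullTrace T → T ⊆ R := by
    intro T hT x hx
    rw [hRdef]
    exact Finset.mem_filter.2 ⟨hT.1 hx, T, hT, hx⟩
  -- FACT 1
  have fact1 : ∀ g : Fin k → Finset (Fin n), (∀ i, FullTrace (g i)) →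
      (Finset.univ.sup g).card ≤ r := by
    intro g hg
    set g' : ℕ → Finset (Fin n) := fun i => if hi : i < k then g ⟨i, hi⟩ else ∅ with hg'
    obtain ⟨Q, hQ⟩ := picktails A W ∅ q ((k-1)*q) k g'
      (fun i hi => by
        have h2 := (hg ⟨i, hi⟩).2
        rw [hFullDef] at h2
        rw [hg']
        simpa only [hi, dif_pos] using h2)
      (fun i hi => by
        simp only [Finset.card_empty, Nat.zero_add]
        exact Nat.mul_le_mul_right q (by omega : i ≤ k-1))
    set f : Fin k → Finset (Fin n) := fun i => g i ∪ Q i.val with hf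
    have hfA : ∀ i, f i ∈ A := by
      intro i
      have h3 := (hQ i.val i.isLt).2.2.1
      rw [hg'] at h3
      simp only [i.isLt, dif_pos, Fin.eta] at h3
      exact h3
    have hcard := hA f hfA
    have hsupf : Finset.univ.sup f
        = Finset.univ.sup g ⊔ Finset.univ.sup (fun i : Fin k => Q i.val) := by
      apply le_antisymm
      · refine Finset.sup_le fun i _ => ?_
        show f i ≤ Finset.univ.sup g ⊔ Finset.univ.sup (fun i : Fin k => Q i.val)
        exact sup_le_sup (Finset.le_sup (Finset.mem_univ i))
          (Finset.le_sup (f := fun i : Fin k => Q i.val) (Finset.mem_univ i))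
      · refine sup_le ?_ ?_
        · refine Finset.sup_le fun i _ => ?_
          exact le_trans le_sup_left (Finset.le_sup (f := f) (Finset.mem_univ i))
        · refine Finset.sup_le fun i _ => ?_
          exact le_trans le_sup_right (Finset.le_sup (f := f) (Finset.mem_univ i))
    have hdisj : Disjoint (Finset.univ.sup g) (Finset.univ.sup (fun i : Fin k => Q i.val)) := by
      rw [Finset.disjoint_left]
      intro x hxg hxQ
      obtain ⟨i, _, hxi⟩ := Finset.mem_sup.1 hxg
      obtain ⟨i', _, hxi'⟩ := Finset.mem_sup.1 hxQ
      have hxW : x ∈ W := (hg i).1 hxi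
      have h8 : Q i'.val ∩ W = ∅ := (hQ i'.val i'.isLt).2.1
      have h9 : x ∈ Q i'.val ∩ W := Finset.mem_inter.2 ⟨hxi', hxW⟩
      rw [h8] at h9
      exact Finset.notMem_empty x h9
    have hQcard : (Finset.univ.sup (fun i : Fin k => Q i.val)).card = k * q := by
      rw [Finset.sup_eq_biUnion, Finset.card_biUnion]
      · rw [Finset.sum_congr rfl (fun i _ => (hQ i.val i.isLt).1), Finset.sum_const,
          Finset.card_univ, Fintype.card_fin, smul_eq_mul]
      · intro i _ j _ hij
        have hvij : i.val ≠ j.val := fun h => hij (Fin.ext h)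
        rcases Nat.lt_or_ge i.val j.val with h | h
        · exact ((hQ j.val j.isLt).2.2.2.2 i.val h).symm
        · exact (hQ i.val i.isLt).2.2.2.2 j.val (by omega)
    have hcard2 : (Finset.univ.sup f).card
        = (Finset.univ.sup g).card + k * q := by
      rw [hsupf, Finset.sup_eq_union, Finset.card_union_of_disjoint hdisj, hQcard]
    omega
  -- |R| ≤ r
  have hRr : R.card ≤ r := by
    by_contra hcon
    push_neg at hcon
    obtain ⟨V, hVR, hVcard⟩ := Finset.exists_subset_card_eq (show r+1 ≤ R.card by omega)
    have hwit : ∀ x ∈ V, ∃ T, FullTrace T ∧ x ∈ T := by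
      intro x hxV
      have h5 := hVR hxV
      rw [hRdef, Finset.mem_filter] at h5
      exact h5.2
    obtain ⟨x₀, hx₀⟩ := Finset.card_pos.1 (by omega : 0 < V.card)
    set T' : Fin n → Finset (Fin n) := fun x =>
      if h : ∃ T, FullTrace T ∧ x ∈ T then h.choose else (hwit x₀ hx₀).choose with hT'
    have hT'p : ∀ x, (∃ T, FullTrace T ∧ x ∈ T) → FullTrace (T' x) ∧ x ∈ T' x := by
      intro x h
      rw [hT']
      simp only [h, dif_pos]
      exact h.choose_spec
    have hT'full : ∀ x, FullTrace (T' x) := by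
      intro x
      by_cases h : ∃ T, FullTrace T ∧ x ∈ T
      · exact (hT'p x h).1
      · rw [hT']
        simp only [h, dif_neg, not_false_iff]
        exact (hwit x₀ hx₀).choose_spec.1
    set L := V.toList with hL
    have hLlen : L.length = r + 1 := by rw [hL, Finset.length_toList, hVcard]
    set g : Fin k → Finset (Fin n) := fun i =>
      T' (L.get ⟨min i.val r, by omega⟩) with hgdef
    have hVsub : V ⊆ Finset.univ.sup g := by
      intro x hxV
      have hxL : x ∈ L := by rw [hL]; exact Finset.mem_toList.2 hxV
      obtain ⟨j, hj⟩ := List.mem_iff_get.1 hxL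
      have hjr : j.val ≤ r := by have := j.isLt; omega
      have hjk : j.val < k := by omega
      have hgi : g ⟨j.val, hjk⟩ = T' x := by
        rw [hgdef]
        have : (⟨min j.val r, by omega⟩ : Fin L.length) = j := by
          apply Fin.ext
          simp [Nat.min_eq_left hjr]
        simp only [this, hj]
      have hxg : x ∈ g ⟨j.val, hjk⟩ := by
        rw [hgi]
        exact (hT'p x (hwit x hxV)).2
      exact Finset.le_sup (f := g) (Finset.mem_univ _) hxg
    have h6 := fact1 g (fun i => hT'full _)
    have h7 := Finset.card_le_card hVsub
    omega
  -- error bound E1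
  have hE1 : (A.filter (fun S => (S \ W).card < q)).card ≤ 2^d * q * n^(q-1) := by
    have h1 := pair_bound (A.filter (fun S => (S \ W).card < q)) W (q-1)
      (fun S hS => by have := (Finset.mem_filter.1 hS).2; omega)
    rw [Fintype.card_fin] at h1
    refine le_trans h1 ?_
    have h2 : ∑ i ∈ Finset.range ((q-1)+1), (n - W.card).choose i ≤ q * n^(q-1) := by
      have hq' : (q-1)+1 = q := by omega
      rw [hq']
      calc ∑ i ∈ Finset.range q, (n-W.card).choose i
          ≤ ∑ _i ∈ Finset.range q, n^(q-1) := by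
            refine Finset.sum_le_sum fun i hi => ?_
            calc (n-W.card).choose i ≤ (n-W.card)^i := Nat.choose_le_pow _ _
              _ ≤ n^i := Nat.pow_le_pow_left (by omega) _
              _ ≤ n^(q-1) := Nat.pow_le_pow_right (by omega)
                  (by simp only [Finset.mem_range] at hi; omega)
        _ = q * n^(q-1) := by rw [Finset.sum_const, Finset.card_range, smul_eq_mul]
    calc 2^W.card * ∑ i ∈ Finset.range ((q-1)+1), (n - W.card).choose i
        ≤ 2^d * (q * n^(q-1)) :=
          Nat.mul_le_mul (Nat.pow_le_pow_right (by norm_num) hW) h2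
      _ = 2^d * q * n^(q-1) := by ring
  -- error bound E2
  have hE2 : ∀ (Tf : Finset (Finset (Fin n))), Tf ⊆ W.powerset → (∀ T ∈ Tf, ¬ Full T) →
      (A.filter (fun S => (S \ W).card = q ∧ S ∩ W ∈ Tf)).card
        ≤ 2^d * ((k-1)*q*q*n^(q-1)) := by
    intro Tf hTfW hTfnF
    have hsub : A.filter (fun S => (S \ W).card = q ∧ S ∩ W ∈ Tf)
        ⊆ Tf.biUnion (fun T => A.filter (fun S => S ∩ W = T ∧ (S \ W).card = q)) := by
      intro S hS
      obtain ⟨hSA, h1, h2⟩ := Finset.mem_filter.1 hS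
      exact Finset.mem_biUnion.2 ⟨S ∩ W, h2, Finset.mem_filter.2 ⟨hSA, rfl, h1⟩⟩
    refine le_trans (Finset.card_le_card hsub) (le_trans Finset.card_biUnion_le ?_)
    have hper : ∀ T ∈ Tf, (A.filter (fun S => S ∩ W = T ∧ (S \ W).card = q)).card
        ≤ (k-1)*q*q*n^(q-1) := by
      intro T hT
      set F := A.filter (fun S => S ∩ W = T ∧ (S \ W).card = q) with hF
      have hrecov : ∀ S ∈ F, S = T ∪ (S \ W) := by
        intro S hS
        obtain ⟨_, h1, _⟩ := Finset.mem_filter.1 hS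
        rw [← h1, Finset.union_comm, Finset.sdiff_union_inter]
      have himg : (F.image (fun S => S \ W)).card = F.card := by
        refine Finset.card_image_of_injOn ?_
        intro S hS S' hS' heq
        simp only [Finset.mem_coe] at hS hS'
        simp only at heq
        rw [hrecov S hS, hrecov S' hS', heq]
      have h2 := matchcount (F.image (fun S => S \ W)) q ((k-1)*q) hq1
        (by
          intro Q hQ
          obtain ⟨S, hS, rfl⟩ := Finset.mem_image.1 hQ
          exact (Finset.mem_filter.1 hS).2.2)
        (by
          intro M hM hMdisj
          by_contra hcon
          push_neg at hcon
          have hFullT : Full T := by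
            rw [hFullDef]
            refine ⟨M, hcon, ?_, hMdisj⟩
            intro Q hQ
            obtain ⟨S, hS, rfl⟩ := Finset.mem_image.1 (hM hQ)
            obtain ⟨hSA, h3, h4⟩ := Finset.mem_filter.1 hS
            refine ⟨h4, Finset.sdiff_inter_self _ _, ?_⟩
            rw [← hrecov S hS]
            exact hSA
          exact hTfnF T hT hFullT)
      rw [himg, Fintype.card_fin] at h2
      exact h2
    calc ∑ T ∈ Tf, (A.filter (fun S => S ∩ W = T ∧ (S \ W).card = q)).card
        ≤ ∑ _T ∈ Tf, (k-1)*q*q*n^(q-1) := Finset.sum_le_sum hper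
      _ = Tf.card * ((k-1)*q*q*n^(q-1)) := by rw [Finset.sum_const, smul_eq_mul]
      _ ≤ 2^d * ((k-1)*q*q*n^(q-1)) := by
          refine Nat.mul_le_mul_right _ ?_
          calc Tf.card ≤ W.powerset.card := Finset.card_le_card hTfW
            _ = 2^W.card := Finset.card_powerset _
            _ ≤ 2^d := Nat.pow_le_pow_right (by norm_num) hW
  have habs' : 2^d*q*n^(q-1) + 2^d*((k-1)*q*q*n^(q-1)) ≤ (n-r).choose q := by
    refine le_trans ?_ hbig
    have h1 : 2^d*((k-1)*q*q*n^(q-1)) ≤ 2^d*(k*q*q*n^(q-1)) := by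
      refine Nat.mul_le_mul_left _ ?_
      refine Nat.mul_le_mul_right _ ?_
      refine Nat.mul_le_mul_right _ ?_
      exact Nat.mul_le_mul_right _ (by omega)
    have h2 : (2^d*q + 2^d*k*q*q) * n^(q-1)
        = 2^d*q*n^(q-1) + 2^d*(k*q*q*n^(q-1)) := by ring
    omega
  by_cases hfull : ∃ T, FullTrace T
  · by_cases hRr' : R.card = r
    · -- case (ii): exact count
      have fact2 : ∀ S ∈ A, (S \ R).card ≤ q := by
        intro S hS
        obtain ⟨T₀, hT₀⟩ := hfull
        have hwitR : ∀ x ∈ R, ∃ T, FullTrace T ∧ x ∈ T := by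
          intro x hx
          rw [hRdef, Finset.mem_filter] at hx
          exact hx.2
        set T' : Fin n → Finset (Fin n) := fun x =>
          if h : ∃ T, FullTrace T ∧ x ∈ T then h.choose else T₀ with hT'
        have hT'p : ∀ x, (∃ T, FullTrace T ∧ x ∈ T) → FullTrace (T' x) ∧ x ∈ T' x := by
          intro x h
          rw [hT']
          simp only [h, dif_pos]
          exact h.choose_spec
        have hT'full : ∀ x, FullTrace (T' x) := by
          intro x
          by_cases h : ∃ T, FullTrace T ∧ x ∈ T
          · exact (hT'p x h).1
          · rw [hT']
            simp only [h, dif_neg, not_false_iff]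
            exact hT₀
        set L := R.toList with hL
        have hLlen : L.length = R.card := Finset.length_toList _
        set m := k - 1 with hm
        have hmk : m + 1 = k := by omega
        set g : ℕ → Finset (Fin n) := fun i =>
          if hi : i < L.length then T' (L.get ⟨i, hi⟩) else T₀ with hg
        have hgfull : ∀ i, FullTrace (g i) := by
          intro i
          by_cases hi : i < L.length
          · have h9 : g i = T' (L.get ⟨i, hi⟩) := by rw [hg]; simp only [hi, dif_pos]
            rw [h9]; exact hT'full _
          · have h9 : g i = T₀ := by rw [hg]; simp only [hi, dif_neg, not_false_iff]
            rw [h9]; exact hT₀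
        have hRcov : R ⊆ (Finset.range m).biUnion g := by
          intro x hx
          obtain ⟨j, hj⟩ := List.mem_iff_get.1 (show x ∈ L from Finset.mem_toList.2 hx)
          have hjm : j.val < m := by
            have h9 : j.val < L.length := j.isLt
            omega
          refine Finset.mem_biUnion.2 ⟨j.val, Finset.mem_range.2 hjm, ?_⟩
          rw [hg]
          simp only [j.isLt, dif_pos]
          have h10 : L.get ⟨j.val, j.isLt⟩ = x := hj
          show x ∈ T' (L.get ⟨j.val, j.isLt⟩)
          rw [h10]
          exact (hT'p x (hwitR x hx)).2
        obtain ⟨Q, hQ⟩ := picktails A W (S \ W) q ((k-1)*q) m g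
          (fun i _ => by
            have h11 := (hgfull i).2
            rw [hFullDef] at h11
            exact h11)
          (fun i hi => by
            have h1 : (S\W).card ≤ q := hSW S hS
            have h12 : (i+1)*q ≤ (k-1)*q := Nat.mul_le_mul_right _ (by omega)
            have h13 : (i+1)*q = i*q + q := by ring
            omega)
        set f : Fin k → Finset (Fin n) := fun i =>
          if hi : i.val < m then g i.val ∪ Q i.val else S with hf
        have hfA : ∀ i, f i ∈ A := by
          intro i
          rw [hf]
          dsimp only
          split
          · next hi => exact (hQ i.val hi).2.2.1
          · exact hS
        have hcard := hA f hfA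
        set P0 : Finset (Fin n) := (S ∩ W) ∪ R with hP0
        set P1 : Finset (Fin n) := S \ W with hP1
        set P2 : Finset (Fin n) := (Finset.range m).biUnion Q with hP2
        have hSsup : S ⊆ Finset.univ.sup f := by
          have h14 : f ⟨m, by omega⟩ = S := by
            rw [hf]
            simp only [lt_irrefl, dif_neg, not_false_iff]
          rw [← h14]
          exact Finset.le_sup (f := f) (Finset.mem_univ _)
        have hissup : ∀ i < m, g i ∪ Q i ⊆ Finset.univ.sup f := by
          intro i hi
          have h15 : f ⟨i, by omega⟩ = g i ∪ Q i := by
            rw [hf]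
            simp only [hi, dif_pos]
          rw [← h15]
          exact Finset.le_sup (f := f) (Finset.mem_univ _)
        have hsub : P0 ∪ P1 ∪ P2 ⊆ Finset.univ.sup f := by
          refine Finset.union_subset (Finset.union_subset (Finset.union_subset ?_ ?_) ?_) ?_
          · exact le_trans Finset.inter_subset_left hSsup
          · intro x hx
            obtain ⟨i, hi, hxi⟩ := Finset.mem_biUnion.1 (hRcov hx)
            rw [Finset.mem_range] at hi
            exact hissup i hi (Finset.mem_union_left _ hxi)
          · exact le_trans (Finset.sdiff_subset) hSsup
          · intro x hx
            obtain ⟨i, hi, hxi⟩ := Finset.mem_biUnion.1 hx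
            rw [Finset.mem_range] at hi
            exact hissup i hi (Finset.mem_union_right _ hxi)
        have hP2card : P2.card = m * q := by
          rw [hP2, Finset.card_biUnion]
          · rw [Finset.sum_congr rfl (fun i hi => (hQ i (Finset.mem_range.1 hi)).1),
              Finset.sum_const, Finset.card_range, smul_eq_mul]
          · intro i hi j hj hij
            rw [Finset.mem_coe, Finset.mem_range] at hi hj
            rcases Nat.lt_or_ge i j with h16 | h16
            · exact ((hQ j hj).2.2.2.2 i h16).symm
            · exact (hQ i hi).2.2.2.2 j (by omega)
        have hP0W : P0 ⊆ W := Finset.union_subset Finset.inter_subset_right hRW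
        have hQW : ∀ i < m, ∀ x ∈ Q i, x ∉ W := by
          intro i hi x hxQ hxW
          have h17 := (hQ i hi).2.1
          have : x ∈ Q i ∩ W := Finset.mem_inter.2 ⟨hxQ, hxW⟩
          rw [h17] at this
          exact Finset.notMem_empty x this
        have hd01 : Disjoint (P0 ∪ P1) P2 := by
          rw [Finset.disjoint_right]
          intro x hxP2 hx01
          obtain ⟨i, hi, hxi⟩ := Finset.mem_biUnion.1 hxP2
          rw [Finset.mem_range] at hi
          rcases Finset.mem_union.1 hx01 with h18 | h18
          · exact hQW i hi x hxi (hP0W h18)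
          · have h19 := (hQ i hi).2.2.2.1
            exact (Finset.disjoint_left.1 h19 hxi) h18
        have hd0 : Disjoint P0 P1 := by
          rw [Finset.disjoint_right]
          intro x hxP1 hxP0
          rw [hP1, Finset.mem_sdiff] at hxP1
          exact hxP1.2 (hP0W hxP0)
        have hcards : (P0 ∪ P1 ∪ P2).card = P0.card + P1.card + m * q := by
          rw [Finset.card_union_of_disjoint hd01, Finset.card_union_of_disjoint hd0, hP2card]
        have hle : P0.card + P1.card + m * q ≤ d := by
          rw [← hcards]
          exact le_trans (Finset.card_le_card hsub) hcard
        have hP0card : ((S ∩ W) \ R).card + R.card = P0.card := Finset.card_sdiff_add_card _ _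
        have hsplitS : S \ R ⊆ ((S ∩ W) \ R) ∪ P1 := by
          intro x hx
          rw [Finset.mem_sdiff] at hx
          by_cases hxW : x ∈ W
          · exact Finset.mem_union_left _
              (Finset.mem_sdiff.2 ⟨Finset.mem_inter.2 ⟨hx.1, hxW⟩, hx.2⟩)
          · exact Finset.mem_union_right _ (Finset.mem_sdiff.2 ⟨hx.1, hxW⟩)
        have h20 := le_trans (Finset.card_le_card hsplitS) (Finset.card_union_le _ _)
        -- arithmetic: P0.card + P1.card ≤ q + r, R.card = r
        have h21 : m * q + q + r = d := by
          rw [← hdqr, ← hmk]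
          ring
        omega
      have h1 := pair_bound A R q fact2
      rw [Fintype.card_fin, hRr'] at h1
      exact h1
    · -- case (iii)
      have hRlt : R.card < r := lt_of_le_of_ne hRr hRr'
      have hsplit := Finset.card_filter_add_card_filter_not
        (s := A) (p := fun S => (S \ R).card ≤ q)
      have hgood : (A.filter (fun S => (S \ R).card ≤ q)).card
          ≤ 2^(r-1) * ∑ i ∈ Finset.range (q+1), (n-(r-1)).choose i := by
        have h1 := pair_bound (A.filter (fun S => (S \ R).card ≤ q)) R q
          (fun S hS => (Finset.mem_filter.1 hS).2)
        rw [Fintype.card_fin] at h1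
        exact le_trans h1 (mono_bound n R.card (r-1) q (by omega) (by omega))
      have hbadsub : A.filter (fun S => ¬ (S \ R).card ≤ q) ⊆
          (A.filter (fun S => (S \ W).card < q)) ∪
          (A.filter (fun S => (S \ W).card = q ∧
            S ∩ W ∈ W.powerset.filter (fun T => ¬ T ⊆ R))) := by
        intro S hS
        obtain ⟨hSA, hSbad⟩ := Finset.mem_filter.1 hS
        have hq' : (S \ W).card ≤ q := hSW S hSA
        rcases Nat.lt_or_ge (S\W).card q with h | h
        · exact Finset.mem_union_left _ (Finset.mem_filter.2 ⟨hSA, h⟩)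
        · have heq : (S\W).card = q := by omega
          refine Finset.mem_union_right _ (Finset.mem_filter.2 ⟨hSA, heq, ?_⟩)
          rw [Finset.mem_filter, Finset.mem_powerset]
          refine ⟨Finset.inter_subset_right, fun hTsub => hSbad ?_⟩
          have hsub2 : S \ R ⊆ S \ W := by
            intro x hx
            rw [Finset.mem_sdiff] at hx ⊢
            refine ⟨hx.1, fun hxW => hx.2 (hTsub (Finset.mem_inter.2 ⟨hx.1, hxW⟩))⟩
          exact le_trans (Finset.card_le_card hsub2) hq'
      have hbad : (A.filter (fun S => ¬ (S \ R).card ≤ q)).card ≤ (n-r).choose q := by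
        refine le_trans (Finset.card_le_card hbadsub)
          (le_trans (Finset.card_union_le _ _) (le_trans ?_ habs'))
        refine Nat.add_le_add hE1 (hE2 _ (Finset.filter_subset _ _) ?_)
        intro T hT
        rw [Finset.mem_filter, Finset.mem_powerset] at hT
        intro hFullT
        exact hT.2 (hTR T ⟨hT.1, hFullT⟩)
      have hfin : 2^(r-1) * ∑ i ∈ Finset.range (q+1), (n-(r-1)).choose i + (n-r).choose q
          ≤ 2^r * ∑ i ∈ Finset.range (q+1), (n-r).choose i := by
        have hm : n-(r-1) = (n-r)+1 := by omega
        rw [hm, sum_choose_succ_eq]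
        have h2 : ∑ i ∈ Finset.range (q+1), (n-r).choose i
            = ∑ i ∈ Finset.range q, (n-r).choose i + (n-r).choose q :=
          Finset.sum_range_succ _ q
        have h3 : (2:ℕ)^r = 2^(r-1) * 2 := by
          rw [← pow_succ]
          congr 1
          omega
        have h4 : (1:ℕ) ≤ 2^(r-1) := Nat.one_le_two_pow
        set Sq' := ∑ i ∈ Finset.range q, (n-r).choose i
        set C := (n-r).choose q
        rw [h2, h3]
        nlinarith [h4]
      calc A.card = (A.filter (fun S => (S \ R).card ≤ q)).card
            + (A.filter (fun S => ¬ (S \ R).card ≤ q)).card := hsplit.symm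
        _ ≤ 2^(r-1) * ∑ i ∈ Finset.range (q+1), (n-(r-1)).choose i + (n-r).choose q :=
            Nat.add_le_add hgood hbad
        _ ≤ 2^r * ∑ i ∈ Finset.range (q+1), (n-r).choose i := hfin
  · -- case (i): no full trace
    have hsplit := Finset.card_filter_add_card_filter_not
      (s := A) (p := fun S => (S \ W).card < q)
    have hneg : A.filter (fun S => ¬ (S \ W).card < q)
        ⊆ A.filter (fun S => (S \ W).card = q ∧ S ∩ W ∈ W.powerset) := by
      intro S hS
      obtain ⟨hSA, h1⟩ := Finset.mem_filter.1 hS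
      refine Finset.mem_filter.2 ⟨hSA, ?_, Finset.mem_powerset.2 Finset.inter_subset_right⟩
      have := hSW S hSA
      omega
    have hnofull : ∀ T ∈ W.powerset, ¬ Full T := by
      intro T hT hFullT
      exact hfull ⟨T, Finset.mem_powerset.1 hT, hFullT⟩
    have h5 := hE2 W.powerset (Finset.Subset.refl _) hnofull
    have h6 : A.card ≤ (n-r).choose q := by
      have h7 := Finset.card_le_card hneg
      have h8 := hE1
      omega
    calc A.card ≤ (n-r).choose q := h6
      _ ≤ ∑ i ∈ Finset.range (q+1), (n-r).choose i :=
          Finset.single_le_sum (fun i _ => Nat.zero_le _) (Finset.self_mem_range_succ q)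
      _ ≤ 2^r * ∑ i ∈ Finset.range (q+1), (n-r).choose i :=
          Nat.le_mul_of_pos_left _ (Nat.pow_pos (n := r) (by norm_num))


end CoreSec

end Statement10Aux

set_option maxHeartbeats 1000000 in
/-- for positive `k, d` with `r = d % k`, there is `n₀(d,k)` such that for
`n ≥ n₀` every `k`-wise `(n−d)`-union family on `[n]` has size at most
`2^r · ∑_{i=0}^{⌊d/k⌋} C(n−r, i)`. -/
theorem statement10 (k d : ℕ) (hk : 0 < k) (hd : 0 < d) :
    ∃ n₀ : ℕ, ∀ n : ℕ, n₀ ≤ n → ∀ A : Finset (Finset (Fin n)),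
      KwiseUnion k d A →
      A.card ≤ 2 ^ (d % k) * ∑ i ∈ Finset.range (d / k + 1), (n - d % k).choose i := by
  classical
  set q := d / k with hqdef
  set r := d % k with hrdef
  have hdqr : k * q + r = d := by rw [hqdef, hrdef]; exact Nat.div_add_mod d k
  rcases Nat.eq_zero_or_pos q with hq0 | hq1
  · -- q = 0 : then r = d
    have hrd : r = d := by simp [hq0] at hdqr; exact hdqr
    refine ⟨d + r + 2, fun n hn A hA => ?_⟩
    rcases A.eq_empty_or_nonempty with rfl | hAne
    · simp
    obtain ⟨W, hW, hSW⟩ := greedy hk A hA hAne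
    have h1 := pair_bound A W q (fun S hS => by rw [hqdef]; exact hSW S hS)
    rw [Fintype.card_fin] at h1
    refine le_trans h1 ?_
    exact mono_bound n W.card r q (by omega) (by omega)
  · -- q ≥ 1
    obtain ⟨n₁, habs⟩ := absorb (2^d*q + 2^d*k*q*q) q r hq1
    refine ⟨n₁ + d + r + 2, fun n hn A hA => ?_⟩
    rcases A.eq_empty_or_nonempty with rfl | hAne
    · simp
    obtain ⟨W, hW, hSW⟩ := greedy hk A hA hAne
    exact core hk hqdef hrdef hq1 A hA W hW
      (fun S hS => by rw [hqdef]; exact hSW S hS) (by omega) (habs n (by omega))
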